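/- Let C and G be real n × n matrices and suppose P and Q are invertible real n × n matrices such that, under a fixed bijection of the index set of size n with the disjoint sum of index sets of sizes r and s, P·C·Q is the block-diagonal matrix with blocks (I_r, N) and P·G·Q is the block-diagonal matrix with blocks (J, I_s), where J is an r × r real matrix and N is an s × s real matrix. Let b : ℝ → ℝ^n, let x : ℝ → ℝ^n be differentiable, define z(t) = Q⁻¹ · x(t) with components z_D(t) ∈ ℝ^r (first block) and z_A(t) ∈ ℝ^s (second block), and define u_D(t) ∈ ℝ^r and u_A(t) ∈ ℝ^s as the corresponding blocks of P · b(t). Then x satisfies C · x′(t) + G · x(t) = b(t) for all t if and only if z_D′(t) = −J · z_D(t) + u_D(t) and N · z_A′(t) = −z_A(t) + u_A(t) for all t. -/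

import Mathlib

open Matrix

private lemma hasDerivAt_lm {n : ℕ} {F : Type*} [NormedAddCommGroup F] [NormedSpace ℝ F]
    (L : (Fin n → ℝ) →ₗ[ℝ] F) (x : ℝ → Fin n → ℝ)
    (hx : Differentiable ℝ x) (t : ℝ) :
    HasDerivAt (fun t => L (x t)) (L (deriv x t)) t := by
  have h1 := (LinearMap.toContinuousLinearMap L).hasFDerivAt (x := x t)
  have h2 := h1.comp_hasDerivAt t (hx t).hasDerivAt
  simpa [Function.comp_def] using h2

private lemma reindex_mulVec_apply {n r s : ℕ} (e : Fin n ≃ Fin r ⊕ Fin s)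
    (M : Matrix (Fin n) (Fin n) ℝ) (v : Fin n → ℝ) (j : Fin r ⊕ Fin s) :
    (Matrix.reindex e e M).mulVec (fun k => v (e.symm k)) j = M.mulVec v (e.symm j) := by
  simp only [Matrix.mulVec, dotProduct, Matrix.reindex_apply, Matrix.submatrix_apply]
  exact Fintype.sum_equiv e.symm _ _ (fun k => rfl)

theorem weierstrass_decouples_dae {n r s : ℕ}
    (C G : Matrix (Fin n) (Fin n) ℝ)
    (P Q : Matrix (Fin n) (Fin n) ℝ) (hP : IsUnit P) (hQ : IsUnit Q)
    (J : Matrix (Fin r) (Fin r) ℝ) (N : Matrix (Fin s) (Fin s) ℝ)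
    (e : Fin n ≃ Fin r ⊕ Fin s)
    (hC : Matrix.reindex e e (P * C * Q) = Matrix.fromBlocks 1 0 0 N)
    (hG : Matrix.reindex e e (P * G * Q) = Matrix.fromBlocks J 0 0 1)
    (b : ℝ → Fin n → ℝ)
    (x : ℝ → Fin n → ℝ) (hx : Differentiable ℝ x)
    (zD : ℝ → Fin r → ℝ) (zA : ℝ → Fin s → ℝ)
    (uD : ℝ → Fin r → ℝ) (uA : ℝ → Fin s → ℝ)
    (hzD : ∀ t i, zD t i = Q⁻¹.mulVec (x t) (e.symm (Sum.inl i)))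
    (hzA : ∀ t i, zA t i = Q⁻¹.mulVec (x t) (e.symm (Sum.inr i)))
    (huD : ∀ t i, uD t i = P.mulVec (b t) (e.symm (Sum.inl i)))
    (huA : ∀ t i, uA t i = P.mulVec (b t) (e.symm (Sum.inr i))) :
    (∀ t : ℝ, C.mulVec (deriv x t) + G.mulVec (x t) = b t) ↔
      ((∀ t : ℝ, deriv zD t = -(J.mulVec (zD t)) + uD t) ∧
       (∀ t : ℝ, N.mulVec (deriv zA t) = -zA t + uA t)) := by
  have hPd : IsUnit P.det := (Matrix.isUnit_iff_isUnit_det P).mp hP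
  have hQd : IsUnit Q.det := (Matrix.isUnit_iff_isUnit_det Q).mp hQ
  have hPinv : P⁻¹ * P = 1 := Matrix.nonsing_inv_mul P hPd
  have hQinv : Q * Q⁻¹ = 1 := Matrix.mul_nonsing_inv Q hQd
  -- derivative of zD
  have hdzD : ∀ t, deriv zD t = fun i => Q⁻¹.mulVec (deriv x t) (e.symm (Sum.inl i)) := by
    intro t
    set L : (Fin n → ℝ) →ₗ[ℝ] (Fin r → ℝ) :=
      (LinearMap.funLeft ℝ ℝ fun i => e.symm (Sum.inl i)).comp Q⁻¹.mulVecLin with hL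
    have hzeq : zD = fun t => L (x t) := by
      funext t i
      simp [hL, LinearMap.funLeft, hzD t i]
    rw [hzeq, (hasDerivAt_lm L x hx t).deriv]
    rfl
  have hdzA : ∀ t, deriv zA t = fun i => Q⁻¹.mulVec (deriv x t) (e.symm (Sum.inr i)) := by
    intro t
    set L : (Fin n → ℝ) →ₗ[ℝ] (Fin s → ℝ) :=
      (LinearMap.funLeft ℝ ℝ fun i => e.symm (Sum.inr i)).comp Q⁻¹.mulVecLin with hL
    have hzeq : zA = fun t => L (x t) := by
      funext t i
      simp [hL, LinearMap.funLeft, hzA t i]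
    rw [hzeq, (hasDerivAt_lm L x hx t).deriv]
    rfl
  have hPinj : Function.Injective (P.mulVec) := by
    intro u v huv
    have h2 := congrArg (P⁻¹.mulVec) huv
    simpa [Matrix.mulVec_mulVec, hPinv, Matrix.one_mulVec] using h2
  have key : ∀ t : ℝ, (C.mulVec (deriv x t) + G.mulVec (x t) = b t) ↔
      ((deriv zD t = -(J.mulVec (zD t)) + uD t) ∧
       (N.mulVec (deriv zA t) = -zA t + uA t)) := by
    intro t
    have l1 : ∀ (M : Matrix (Fin n) (Fin n) ℝ) (v : Fin n → ℝ),
        (P * M * Q).mulVec (Q⁻¹.mulVec v) = P.mulVec (M.mulVec v) := by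
      intro M v
      rw [Matrix.mulVec_mulVec, mul_assoc (P * M), hQinv, mul_one, ← Matrix.mulVec_mulVec]
    -- step 1
    have step1 : (C.mulVec (deriv x t) + G.mulVec (x t) = b t) ↔
        (P * C * Q).mulVec (Q⁻¹.mulVec (deriv x t))
          + (P * G * Q).mulVec (Q⁻¹.mulVec (x t)) = P.mulVec (b t) := by
      rw [l1, l1, ← Matrix.mulVec_add]
      exact ⟨fun h => congrArg _ h, fun h => hPinj h⟩
    rw [step1]
    -- step 2: componentwise over the sum index
    have step2 : ((P * C * Q).mulVec (Q⁻¹.mulVec (deriv x t))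
          + (P * G * Q).mulVec (Q⁻¹.mulVec (x t)) = P.mulVec (b t)) ↔
        ∀ j : Fin r ⊕ Fin s,
          (P * C * Q).mulVec (Q⁻¹.mulVec (deriv x t)) (e.symm j)
          + (P * G * Q).mulVec (Q⁻¹.mulVec (x t)) (e.symm j) = P.mulVec (b t) (e.symm j) := by
      constructor
      · intro h j
        exact congrFun h (e.symm j)
      · intro h
        funext k
        simpa using h (e k)
    rw [step2]
    -- rewrite components via reindex / fromBlocks
    have hcomp : ∀ j : Fin r ⊕ Fin s,
        (P * C * Q).mulVec (Q⁻¹.mulVec (deriv x t)) (e.symm j)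
        = Sum.elim ((1 : Matrix (Fin r) (Fin r) ℝ).mulVec (deriv zD t))
            (N.mulVec (deriv zA t)) j := by
      intro j
      rw [← reindex_mulVec_apply e, hC, Matrix.fromBlocks_mulVec]
      cases j with
      | inl i => simp [hdzD t, hdzA t, Function.comp_def]
      | inr i => simp [hdzD t, hdzA t, Function.comp_def]
    have hcomp2 : ∀ j : Fin r ⊕ Fin s,
        (P * G * Q).mulVec (Q⁻¹.mulVec (x t)) (e.symm j)
        = Sum.elim (J.mulVec (zD t))
            ((1 : Matrix (Fin s) (Fin s) ℝ).mulVec (zA t)) j := by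
      intro j
      rw [← reindex_mulVec_apply e, hG, Matrix.fromBlocks_mulVec]
      cases j with
      | inl i =>
        simp only [Sum.elim_inl, Matrix.add_apply, Matrix.zero_mulVec, Pi.add_apply,
          Pi.zero_apply, add_zero]
        congr 1
        funext k
        exact (hzD t k).symm
      | inr i =>
        simp only [Sum.elim_inr, Matrix.add_apply, Matrix.zero_mulVec, Pi.add_apply,
          Pi.zero_apply, zero_add]
        congr 1
        funext k
        exact (hzA t k).symm
    constructor
    · intro h
      constructor
      · funext i
        have := h (Sum.inl i)
        rw [hcomp, hcomp2] at this
        simp only [Sum.elim_inl, Matrix.one_mulVec] at this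
        rw [← huD t i] at this
        simp only [Pi.add_apply, Pi.neg_apply]
        linarith [this]
      · funext i
        have := h (Sum.inr i)
        rw [hcomp, hcomp2] at this
        simp only [Sum.elim_inr, Matrix.one_mulVec] at this
        rw [← huA t i] at this
        simp only [Pi.add_apply, Pi.neg_apply]
        linarith [this]
    · rintro ⟨h1, h2⟩ j
      rw [hcomp, hcomp2]
      cases j with
      | inl i =>
        have := congrFun h1 i
        simp only [Pi.add_apply, Pi.neg_apply] at this
        simp only [Sum.elim_inl, Matrix.one_mulVec]
        rw [huD t i] at this
        linarith [this]
      | inr i =>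
        have := congrFun h2 i
        simp only [Pi.add_apply, Pi.neg_apply] at this
        simp only [Sum.elim_inr, Matrix.one_mulVec]
        rw [huA t i] at this
        linarith [this]
  constructor
  · intro h
    exact ⟨fun t => ((key t).mp (h t)).1, fun t => ((key t).mp (h t)).2⟩
  · rintro ⟨h1, h2⟩ t
    exact (key t).mpr ⟨h1 t, h2 t⟩
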